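/- Consider an exponential mechanism over a fixed compact support 𝒮 with density proportional to exp(−(ε/(4Δ)) D_S(θ̂)). Suppose there exist disjoint interpretation sets with: the 'good' set G_in = {θ̂ : D(θ̂) ≤ a} has base measure at least e^{−c₂ p} times that of the whole support, and D_S approximates a target score D within additive b uniformly (so D_S ≤ a + b on G_in and D_S ≥ a' − b whenever D(θ̂) ≥ a' > a + 2b). Then the probability of outputting θ̂ with D(θ̂) ≥ a' is at most e^{c₂ p} · exp(−ε(a' − a − 2b)/(4Δ)). -/

import Mathlib

open MeasureTheory

/-- Utility of the exponential mechanism over a fixed support: if the base measure of the 'good'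
set `{θ̂ : D(θ̂) ≤ a}` is at least `e^{−c₂ p}` times the total mass, and `D_S` approximates the
target score `D` within additive `b` uniformly, then the exponential mechanism with density
proportional to `exp(−(ε/(4Δ)) D_S(θ̂))` outputs `θ̂` with `D(θ̂) ≥ a'` with probability at most
`e^{c₂ p} · exp(−ε(a' − a − 2b)/(4Δ))`. -/
theorem exponential_mechanism_utility {𝒮 : Type*} [MeasurableSpace 𝒮]
    (ν : Measure 𝒮) [IsFiniteMeasure ν]
    (D DS : 𝒮 → ℝ) (hD : Measurable D) (hDS : Measurable DS)
    (a a' b c₂ p ε Δ : ℝ) (hb : 0 ≤ b) (hc₂ : 0 < c₂) (hp : 0 < p) (hε : 0 < ε) (hΔ : 0 < Δ)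
    (hgap : 2 * b < a' - a)
    (happrox : ∀ θ : 𝒮, |D θ - DS θ| ≤ b)
    (hgood : Real.exp (-(c₂ * p)) * (ν Set.univ).toReal ≤ (ν {θ : 𝒮 | D θ ≤ a}).toReal) :
    (∫⁻ θ in {θ : 𝒮 | a' ≤ D θ}, ENNReal.ofReal (Real.exp (-(ε * DS θ) / (4 * Δ))) ∂ν) /
        (∫⁻ θ, ENNReal.ofReal (Real.exp (-(ε * DS θ) / (4 * Δ))) ∂ν)
      ≤ ENNReal.ofReal
          (Real.exp (c₂ * p) * Real.exp (-(ε * (a' - a - 2 * b)) / (4 * Δ))) := by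
  set f : 𝒮 → ENNReal := fun θ => ENNReal.ofReal (Real.exp (-(ε * DS θ) / (4 * Δ))) with hfdef
  have hfm : Measurable f := (((hDS.const_mul ε).neg.div_const (4 * Δ)).exp).ennreal_ofReal
  have h4Δ : (0:ℝ) < 4 * Δ := by linarith
  set N := ∫⁻ θ in {θ : 𝒮 | a' ≤ D θ}, f θ ∂ν with hNdef
  set Den := ∫⁻ θ, f θ ∂ν with hDendef
  set R := ENNReal.ofReal
      (Real.exp (c₂ * p) * Real.exp (-(ε * (a' - a - 2 * b)) / (4 * Δ))) with hRdef
  set c₁ : ENNReal := ENNReal.ofReal (Real.exp (-(ε * (a' - b)) / (4 * Δ))) with hc1def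
  set c₂' : ENNReal := ENNReal.ofReal (Real.exp (-(ε * (a + b)) / (4 * Δ))) with hc2def
  -- Numerator bound
  have hN : N ≤ c₁ * ν {θ : 𝒮 | a' ≤ D θ} := by
    have : N ≤ ∫⁻ _ in {θ : 𝒮 | a' ≤ D θ}, c₁ ∂ν := by
      apply setLIntegral_mono measurable_const
      intro θ hθ
      have hab := (abs_le.mp (happrox θ)).2
      have hθ' : a' ≤ D θ := hθ
      have hds : a' - b ≤ DS θ := by linarith
      apply ENNReal.ofReal_le_ofReal
      apply Real.exp_le_exp.mpr
      have : ε * (a' - b) ≤ ε * DS θ := by nlinarith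
      exact div_le_div_of_nonneg_right (by linarith) h4Δ.le
    simpa [setLIntegral_const] using this
  -- Denominator lower bound
  have hDenLB : c₂' * ν {θ : 𝒮 | D θ ≤ a} ≤ Den := by
    have h1 : (∫⁻ _ in {θ : 𝒮 | D θ ≤ a}, c₂' ∂ν) ≤ ∫⁻ θ in {θ : 𝒮 | D θ ≤ a}, f θ ∂ν := by
      apply setLIntegral_mono hfm
      intro θ hθ
      have hab := (abs_le.mp (happrox θ)).1
      have hθ' : D θ ≤ a := hθ
      have hds : DS θ ≤ a + b := by linarith
      apply ENNReal.ofReal_le_ofReal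
      apply Real.exp_le_exp.mpr
      have : ε * DS θ ≤ ε * (a + b) := by nlinarith
      exact div_le_div_of_nonneg_right (by linarith) h4Δ.le
    calc c₂' * ν {θ : 𝒮 | D θ ≤ a} = ∫⁻ _ in {θ : 𝒮 | D θ ≤ a}, c₂' ∂ν := by
          simp [setLIntegral_const]
      _ ≤ ∫⁻ θ in {θ : 𝒮 | D θ ≤ a}, f θ ∂ν := h1
      _ ≤ Den := setLIntegral_le_lintegral _ _
  -- good set measure bound in ENNReal
  have hνgood : ENNReal.ofReal (Real.exp (-(c₂ * p))) * ν Set.univ ≤ ν {θ : 𝒮 | D θ ≤ a} := by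
    rw [← ENNReal.toReal_le_toReal (by finiteness) (measure_ne_top ν _)]
    rw [ENNReal.toReal_mul, ENNReal.toReal_ofReal (Real.exp_nonneg _)]
    exact hgood
  -- key constant identity
  have hkey : c₁ = R * c₂' * ENNReal.ofReal (Real.exp (-(c₂ * p))) := by
    rw [hRdef, hc1def, hc2def, ← ENNReal.ofReal_mul (by positivity),
      ← ENNReal.ofReal_mul (by positivity)]
    congr 1
    rw [← Real.exp_add, ← Real.exp_add, ← Real.exp_add]
    congr 1
    field_simp
    ring
  by_cases hDenTop : Den = ⊤
  · rw [hDenTop, ENNReal.div_top]; exact zero_le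
  by_cases hDen0 : Den = 0
  · have hN0 : N ≤ Den := setLIntegral_le_lintegral _ _
    rw [hDen0] at hN0
    simp [le_zero_iff.mp hN0, hDen0]
  rw [ENNReal.div_le_iff hDen0 hDenTop]
  calc N ≤ c₁ * ν {θ : 𝒮 | a' ≤ D θ} := hN
    _ ≤ c₁ * ν Set.univ := by
        exact mul_le_mul_right (measure_mono (Set.subset_univ _)) _
    _ = R * (c₂' * (ENNReal.ofReal (Real.exp (-(c₂ * p))) * ν Set.univ)) := by
        rw [hkey]; ring
    _ ≤ R * (c₂' * ν {θ : 𝒮 | D θ ≤ a}) := by gcongr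
    _ ≤ R * Den := by gcongr
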